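/- For two independent exponential random variables X and Y with means a > 0 and b > 0 respectively, the CDF of the product XY satisfies P(XY < z) = 1 − ∫₀^∞ e^{−z/(a y)} (1/b) e^{−y/b} dy for z > 0, and this integral equals 2√(z/(ab)) K₁(2√(z/(ab))), where K₁ is the modified Bessel function of the second kind of order 1. -/

import Mathlib

open MeasureTheory Real ProbabilityTheory

/-- Modified Bessel function of the second kind of order 1,
via K₁(x) = ∫₀^∞ e^(−x cosh t) cosh t dt. -/
noncomputable def besselK1 (x : ℝ) : ℝ :=
  ∫ t in Set.Ioi (0 : ℝ), Real.exp (-x * Real.cosh t) * Real.cosh t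

section Aux
open Set
section P2
variable {a b z : ℝ}

lemma g_meas (a b z : ℝ) :
    Measurable (fun y : ℝ => Real.exp (-(z / (a * y))) * ((1 / b) * Real.exp (-(y / b)))) := by
  fun_prop

lemma g_intOn (ha : 0 < a) (hb : 0 < b) (hz : 0 < z) :
    IntegrableOn (fun y : ℝ => Real.exp (-(z / (a * y))) * ((1 / b) * Real.exp (-(y / b))))
      (Ioi (0:ℝ)) := by
  have hint : IntegrableOn (fun y : ℝ => (1/b) * Real.exp (-b⁻¹ * y)) (Ioi (0:ℝ)) :=
    (exp_neg_integrableOn_Ioi (0:ℝ) (show (0:ℝ) < b⁻¹ by positivity)).const_mul (1/b)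
  refine hint.mono' ((g_meas a b z).aestronglyMeasurable) ?_
  filter_upwards [ae_restrict_mem measurableSet_Ioi] with y hy
  have h1 : Real.exp (-(z / (a * y))) ≤ 1 := by
    apply Real.exp_le_one_iff.mpr
    have : 0 < z / (a * y) := div_pos hz (mul_pos ha hy)
    linarith
  rw [Real.norm_eq_abs, abs_of_nonneg (by positivity)]
  calc Real.exp (-(z / (a * y))) * ((1 / b) * Real.exp (-(y / b)))
      ≤ 1 * ((1 / b) * Real.exp (-(y / b))) := by
        apply mul_le_mul_of_nonneg_right h1 (by positivity)
    _ = (1/b) * Real.exp (-b⁻¹ * y) := by rw [one_mul]; ring_nf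

end P2

section CV
variable {a b z : ℝ} (ha : 0 < a) (hb : 0 < b) (hz : 0 < z)

lemma image_Ioi (c : ℝ) (hbc : 0 < b * c) :
    (fun t : ℝ => b * c * Real.exp t) '' Ioi (0:ℝ) = Ioi (b * c) := by
  ext y; constructor
  · rintro ⟨t, ht, rfl⟩
    have h1 : (1:ℝ) < Real.exp t := Real.one_lt_exp_iff.mpr ht
    simpa using (by nlinarith : b*c < b*c*Real.exp t)
  · intro hy
    have hy' : (0:ℝ) < y := lt_trans hbc hy
    refine ⟨Real.log (y / (b*c)), ?_, ?_⟩
    · simp only [mem_Ioi]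
      apply Real.log_pos
      rw [lt_div_iff₀ hbc]; linarith [mem_Ioi.mp hy]
    · show b * c * Real.exp (Real.log (y / (b*c))) = y
      rw [Real.exp_log (by positivity)]; field_simp; exact div_self hbc.ne'

lemma image_Iio (c : ℝ) (hbc : 0 < b * c) :
    (fun t : ℝ => b * c * Real.exp t) '' Iio (0:ℝ) = Ioo 0 (b * c) := by
  ext y; constructor
  · rintro ⟨t, ht, rfl⟩
    have h1 : Real.exp t < 1 := Real.exp_lt_one_iff.mpr ht
    have h2 : 0 < Real.exp t := Real.exp_pos t
    refine ⟨by positivity, ?_⟩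
    show b * c * Real.exp t < b * c
    nlinarith
  · rintro ⟨hy1, hy2⟩
    refine ⟨Real.log (y / (b*c)), ?_, ?_⟩
    · simp only [mem_Iio]
      apply Real.log_neg (by positivity)
      rw [div_lt_one hbc]; linarith
    · show b * c * Real.exp (Real.log (y / (b*c))) = y
      rw [Real.exp_log (by positivity)]; field_simp; exact div_self hbc.ne'

lemma inj_exp_mul (c : ℝ) (hbc : 0 < b * c) (s : Set ℝ) :
    Set.InjOn (fun t : ℝ => b * c * Real.exp t) s := by
  intro x _ y _ h
  simp only at h
  have := mul_left_cancel₀ (ne_of_gt hbc) h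
  exact Real.exp_injective this

lemma deriv_exp_mul (c : ℝ) (s : Set ℝ) :
    ∀ x ∈ s, HasDerivWithinAt (fun t : ℝ => b * c * Real.exp t) (b * c * Real.exp x) s x :=
  fun x _ => ((Real.hasDerivAt_exp x).const_mul (b*c)).hasDerivWithinAt

end CV

section Key
variable {a b z : ℝ}

lemma key_ident (ha : 0 < a) (hb : 0 < b) (hz : 0 < z)
    {c : ℝ} (hc : 0 < c) (hc2 : c^2 = z / (a*b)) (t : ℝ) :
    b * c * Real.exp t *
      (Real.exp (-(z / (a * (b * c * Real.exp t)))) * ((1 / b) * Real.exp (-(b * c * Real.exp t / b))))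
    = c * (Real.exp (-(2*c) * Real.cosh t) * Real.exp t) := by
  have hzc : z = c^2 * (a*b) := by rw [hc2]; field_simp
  have h1 : z / (a * (b * c * Real.exp t)) = c * Real.exp (-t) := by
    rw [Real.exp_neg, hzc]
    have h := Real.exp_pos t
    field_simp
  have h2 : b * c * Real.exp t / b = c * Real.exp t := by field_simp
  rw [h1, h2, Real.cosh_eq]
  have h3 : -(2*c) * ((Real.exp t + Real.exp (-t))/2) = -(c * Real.exp (-t)) + -(c * Real.exp t) := by
    ring
  rw [h3, Real.exp_add]
  field_simp

lemma part2 (ha : 0 < a) (hb : 0 < b) (hz : 0 < z)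
    {c : ℝ} (hc : 0 < c) (hc2 : c^2 = z / (a*b)) :
    (∫ y in Set.Ioi (0 : ℝ), Real.exp (-(z / (a * y))) * ((1 / b) * Real.exp (-(y / b))))
        = 2 * c * (∫ t in Set.Ioi (0:ℝ), Real.exp (-(2*c) * Real.cosh t) * Real.cosh t) := by
  set g : ℝ → ℝ := fun y => Real.exp (-(z / (a * y))) * ((1 / b) * Real.exp (-(y / b))) with hg
  have hbc : 0 < b * c := mul_pos hb hc
  have habs : ∀ x : ℝ, |b * c * Real.exp x| = b * c * Real.exp x := fun x =>
    abs_of_pos (by positivity)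
  -- change of variables on Ioi (b*c)
  have hI1 : ∫ y in Ioi (b*c), g y = ∫ t in Ioi (0:ℝ), c * (Real.exp (-(2*c) * Real.cosh t) * Real.exp t) := by
    rw [← image_Ioi c hbc,
      integral_image_eq_integral_abs_deriv_smul measurableSet_Ioi (deriv_exp_mul c _)
        (inj_exp_mul c hbc _) g]
    refine setIntegral_congr_fun measurableSet_Ioi (fun t _ => ?_)
    rw [smul_eq_mul, habs, hg]
    exact key_ident ha hb hz hc hc2 t
  have hI2 : ∫ y in Ioo (0:ℝ) (b*c), g y = ∫ t in Iio (0:ℝ), c * (Real.exp (-(2*c) * Real.cosh t) * Real.exp t) := by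
    rw [← image_Iio c hbc,
      integral_image_eq_integral_abs_deriv_smul measurableSet_Iio (deriv_exp_mul c _)
        (inj_exp_mul c hbc _) g]
    refine setIntegral_congr_fun measurableSet_Iio (fun t _ => ?_)
    rw [smul_eq_mul, habs, hg]
    exact key_ident ha hb hz hc hc2 t
  -- integrability of both t-side pieces
  have hint1 : IntegrableOn (fun t : ℝ => c * (Real.exp (-(2*c) * Real.cosh t) * Real.exp t)) (Ioi (0:ℝ)) := by
    have h := (integrableOn_image_iff_integrableOn_abs_deriv_smul measurableSet_Ioi
        (deriv_exp_mul c (Ioi (0:ℝ))) (inj_exp_mul c hbc _) g).mp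
      (by rw [image_Ioi c hbc]; exact (g_intOn ha hb hz).mono_set (Ioi_subset_Ioi hbc.le))
    refine h.congr_fun (fun t _ => ?_) measurableSet_Ioi
    beta_reduce
    rw [smul_eq_mul, habs, hg]
    exact key_ident ha hb hz hc hc2 t
  have hint2 : IntegrableOn (fun t : ℝ => c * (Real.exp (-(2*c) * Real.cosh t) * Real.exp t)) (Iio (0:ℝ)) := by
    have h := (integrableOn_image_iff_integrableOn_abs_deriv_smul measurableSet_Iio
        (deriv_exp_mul c (Iio (0:ℝ))) (inj_exp_mul c hbc _) g).mp
      (by rw [image_Iio c hbc]; exact (g_intOn ha hb hz).mono_set Ioo_subset_Ioi_self)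
    refine h.congr_fun (fun t _ => ?_) measurableSet_Iio
    beta_reduce
    rw [smul_eq_mul, habs, hg]
    exact key_ident ha hb hz hc hc2 t
  -- reflect hI2 to Ioi 0
  have hI2' : ∫ y in Ioo (0:ℝ) (b*c), g y
      = ∫ t in Ioi (0:ℝ), c * (Real.exp (-(2*c) * Real.cosh t) * Real.exp (-t)) := by
    rw [hI2]
    have := integral_comp_neg_Ioi (0:ℝ) (fun t => c * (Real.exp (-(2*c) * Real.cosh t) * Real.exp t))
    rw [neg_zero] at this
    rw [← integral_Iic_eq_integral_Iio, ← this]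
    refine setIntegral_congr_fun measurableSet_Ioi (fun t _ => ?_)
    rw [Real.cosh_neg]
  -- split the original integral
  have hsplit : (∫ y in Set.Ioi (0 : ℝ), g y)
      = (∫ y in Ioo (0:ℝ) (b*c), g y) + ∫ y in Ioi (b*c), g y := by
    rw [← integral_Ioc_eq_integral_Ioo, ← setIntegral_union
      (Set.Ioc_disjoint_Ioi le_rfl) measurableSet_Ioi
      ((g_intOn ha hb hz).mono_set Ioc_subset_Ioi_self)
      ((g_intOn ha hb hz).mono_set (Ioi_subset_Ioi hbc.le)),
      Set.Ioc_union_Ioi_eq_Ioi hbc.le]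
  -- integrability of reflected piece on Ioi 0
  have hint2' : IntegrableOn (fun t : ℝ => c * (Real.exp (-(2*c) * Real.cosh t) * Real.exp (-t))) (Ioi (0:ℝ)) := by
    have h := (MeasurePreserving.integrableOn_comp_preimage
        (Measure.measurePreserving_neg (volume : Measure ℝ))
        (Homeomorph.neg ℝ).measurableEmbedding).2 hint2
    have hs : (Neg.neg ⁻¹' (Iio (0:ℝ)) : Set ℝ) = Ioi 0 := by ext x; simp
    rw [hs] at h
    refine h.congr_fun (fun t _ => ?_) measurableSet_Ioi
    simp [Function.comp, Real.cosh_neg]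
  rw [hsplit, hI1, hI2', ← integral_add hint2' hint1]
  rw [← integral_const_mul]
  refine setIntegral_congr_fun measurableSet_Ioi (fun t _ => ?_)
  rw [Real.cosh_eq]
  ring

end Key

section P1
variable {a b z : ℝ}

lemma expMeasure_eq_withDensity (r : ℝ) :
    expMeasure r = (volume : Measure ℝ).withDensity (exponentialPDF r) := rfl

lemma expMeasure_Iic_zero {r : ℝ} (hr : 0 < r) : expMeasure r (Iic 0) = 0 := by
  rw [expMeasure_eq_withDensity, withDensity_apply _ measurableSet_Iic,
    lintegral_exponentialPDF_eq_antiDeriv hr]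
  simp

lemma expMeasure_Iio {r : ℝ} (hr : 0 < r) {t : ℝ} (ht : 0 ≤ t) :
    expMeasure r (Iio t) = ENNReal.ofReal (1 - Real.exp (-(r * t))) := by
  rw [expMeasure_eq_withDensity, withDensity_apply _ measurableSet_Iio,
    setLIntegral_congr Iio_ae_eq_Iic, lintegral_exponentialPDF_eq_antiDeriv hr, if_pos ht]

lemma base_int' (hb : 0 < b) :
    IntegrableOn (fun y : ℝ => (1/b) * Real.exp (-(y / b))) (Ioi (0:ℝ)) := by
  have hint : IntegrableOn (fun y : ℝ => (1/b) * Real.exp (-b⁻¹ * y)) (Ioi (0:ℝ)) :=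
    (exp_neg_integrableOn_Ioi (0:ℝ) (show (0:ℝ) < b⁻¹ by positivity)).const_mul (1/b)
  refine hint.congr_fun (fun y _ => ?_) measurableSet_Ioi
  beta_reduce
  rw [neg_mul, inv_mul_eq_div]

lemma base_int_val (hb : 0 < b) :
    ∫ y in Ioi (0:ℝ), (1/b) * Real.exp (-(y / b)) = 1 := by
  have h1 : ∫ x in Ioi (0:ℝ), Real.exp (-(b⁻¹ * x)) = b := by
    have := integral_comp_mul_left_Ioi (fun x => Real.exp (-x)) 0 (show (0:ℝ) < b⁻¹ by positivity)
    simp only [mul_zero, integral_exp_neg_Ioi, Real.exp_zero, smul_eq_mul, mul_one, inv_inv, neg_zero] at this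
    exact this
  have h2 : ∫ y in Ioi (0:ℝ), (1/b) * Real.exp (-(y / b))
      = ∫ y in Ioi (0:ℝ), (1/b) * Real.exp (-(b⁻¹ * y)) := by
    refine setIntegral_congr_fun measurableSet_Ioi (fun y _ => ?_)
    rw [inv_mul_eq_div]
  rw [h2, integral_const_mul, h1]
  field_simp

end P1

lemma part1 {Ω : Type*} [MeasurableSpace Ω] (P : Measure Ω) [IsProbabilityMeasure P]
    (X Y : Ω → ℝ) (hX : Measurable X) (hY : Measurable Y)
    {a b : ℝ} (ha : 0 < a) (hb : 0 < b)
    (hXlaw : Measure.map X P = ProbabilityTheory.expMeasure (1 / a))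
    (hYlaw : Measure.map Y P = ProbabilityTheory.expMeasure (1 / b))
    (hindep : ProbabilityTheory.IndepFun X Y P)
    {z : ℝ} (hz : 0 < z) :
    (P {ω | X ω * Y ω < z}).toReal
      = 1 - ∫ y in Set.Ioi (0 : ℝ), Real.exp (-(z / (a * y))) * ((1 / b) * Real.exp (-(y / b))) := by
  have ha' : (0:ℝ) < 1/a := by positivity
  have hb' : (0:ℝ) < 1/b := by positivity
  have hprobA : IsProbabilityMeasure (expMeasure (1/a)) := isProbabilityMeasure_expMeasure ha'
  have hprobB : IsProbabilityMeasure (expMeasure (1/b)) := isProbabilityMeasure_expMeasure hb'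
  set s : Set (ℝ × ℝ) := {p : ℝ × ℝ | p.1 * p.2 < z} with hsdef
  have hs : MeasurableSet s := measurableSet_lt (measurable_fst.mul measurable_snd) measurable_const
  have hmap : P.map (fun ω => (X ω, Y ω)) = (expMeasure (1/a)).prod (expMeasure (1/b)) := by
    rw [← hXlaw, ← hYlaw]
    exact (ProbabilityTheory.indepFun_iff_map_prod_eq_prod_map_map hX.aemeasurable
      hY.aemeasurable).mp hindep
  have h0 : P {ω | X ω * Y ω < z} = ((expMeasure (1/a)).prod (expMeasure (1/b))) s := by
    rw [← hmap, Measure.map_apply (hX.prodMk hY) hs]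
    rfl
  -- slice measure
  have hslice : ∀ y : ℝ, y ∈ Ioi (0:ℝ) →
      (expMeasure (1/a)) ((fun x => (x, y)) ⁻¹' s)
        = ENNReal.ofReal (1 - Real.exp (-(z / (a * y)))) := by
    intro y hy
    have hy' : (0:ℝ) < y := hy
    have hpre : ((fun x => (x, y)) ⁻¹' s) = Iio (z / y) := by
      ext x
      simp only [hsdef, mem_preimage, mem_setOf_eq, mem_Iio]
      exact lt_div_iff₀ hy' |>.symm
    rw [hpre, expMeasure_Iio ha' (le_of_lt (div_pos hz hy'))]
    congr 2
    field_simp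
  have h1 : ((expMeasure (1/a)).prod (expMeasure (1/b))) s
      = ∫⁻ y in Ioi (0:ℝ), ENNReal.ofReal (1 - Real.exp (-(z / (a * y)))) ∂(expMeasure (1/b)) := by
    rw [Measure.prod_apply_symm hs,
      ← lintegral_add_compl (fun y => (expMeasure (1/a)) ((fun x => (x, y)) ⁻¹' s))
        measurableSet_Ioi (μ := expMeasure (1/b))]
    have hcompl : ∫⁻ y in (Ioi (0:ℝ))ᶜ, (expMeasure (1/a)) ((fun x => (x, y)) ⁻¹' s)
        ∂(expMeasure (1/b)) = 0 := by
      rw [compl_Ioi]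
      exact setLIntegral_measure_zero _ _ (expMeasure_Iic_zero hb')
    rw [hcompl, add_zero]
    exact setLIntegral_congr_fun measurableSet_Ioi (fun y hy => hslice y hy)
  -- with-density
  have hpdf_meas : Measurable (exponentialPDF (1/b)) :=
    (measurable_exponentialPDFReal (1/b)).ennreal_ofReal
  have hF_meas : Measurable (fun y : ℝ => ENNReal.ofReal (1 - Real.exp (-(z / (a * y))))) := by
    fun_prop
  have h2 : ∫⁻ y in Ioi (0:ℝ), ENNReal.ofReal (1 - Real.exp (-(z / (a * y)))) ∂(expMeasure (1/b))
      = ∫⁻ y in Ioi (0:ℝ),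
          ENNReal.ofReal ((1 - Real.exp (-(z / (a * y)))) * ((1 / b) * Real.exp (-(y / b)))) := by
    rw [expMeasure_eq_withDensity,
      setLIntegral_withDensity_eq_setLIntegral_mul _ hpdf_meas hF_meas measurableSet_Ioi]
    refine setLIntegral_congr_fun measurableSet_Ioi (fun y hy => ?_)
    have hy' : (0:ℝ) < y := hy
    rw [Pi.mul_apply, exponentialPDF_of_nonneg hy'.le,
      ← ENNReal.ofReal_mul (by positivity)]
    rw [show -((1:ℝ)/b * y) = -(y/b) by ring]
    congr 1
    ring
  -- to Bochner integral
  have h3 : (∫⁻ y in Ioi (0:ℝ),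
        ENNReal.ofReal ((1 - Real.exp (-(z / (a * y)))) * ((1 / b) * Real.exp (-(y / b))))).toReal
      = ∫ y in Ioi (0:ℝ), (1 - Real.exp (-(z / (a * y)))) * ((1 / b) * Real.exp (-(y / b))) := by
    rw [integral_eq_lintegral_of_nonneg_ae ?_ ?_]
    · filter_upwards [ae_restrict_mem measurableSet_Ioi] with y hy
      have hy' : (0:ℝ) < y := hy
      have hle : Real.exp (-(z / (a * y))) ≤ 1 := by
        apply Real.exp_le_one_iff.mpr
        have : 0 < z / (a * y) := div_pos hz (mul_pos ha hy')
        linarith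
      have : 0 ≤ 1 - Real.exp (-(z / (a * y))) := by linarith
      positivity
    · apply Measurable.aestronglyMeasurable
      fun_prop
  have h4 : ∫ y in Ioi (0:ℝ), (1 - Real.exp (-(z / (a * y)))) * ((1 / b) * Real.exp (-(y / b)))
      = 1 - ∫ y in Set.Ioi (0 : ℝ), Real.exp (-(z / (a * y))) * ((1 / b) * Real.exp (-(y / b))) := by
    have heq : ∀ y : ℝ, (1 - Real.exp (-(z / (a * y)))) * ((1 / b) * Real.exp (-(y / b)))
        = (1/b) * Real.exp (-(y / b)) - Real.exp (-(z / (a * y))) * ((1 / b) * Real.exp (-(y / b))) := by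
      intro y; ring
    simp only [heq]
    rw [integral_sub (base_int' hb) (g_intOn ha hb hz), base_int_val hb]
  rw [h0, h1, h2, h3, h4]


end Aux

/-- CDF of the product of two independent exponentials with means a and b. -/
theorem product_two_exponentials_cdf
    {Ω : Type*} [MeasurableSpace Ω] (P : Measure Ω) [IsProbabilityMeasure P]
    (X Y : Ω → ℝ) (hX : Measurable X) (hY : Measurable Y)
    (a b : ℝ) (ha : 0 < a) (hb : 0 < b)
    (hXlaw : Measure.map X P = ProbabilityTheory.expMeasure (1 / a))
    (hYlaw : Measure.map Y P = ProbabilityTheory.expMeasure (1 / b))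
    (hindep : ProbabilityTheory.IndepFun X Y P)
    (z : ℝ) (hz : 0 < z) :
    (P {ω | X ω * Y ω < z}).toReal
      = 1 - ∫ y in Set.Ioi (0 : ℝ), Real.exp (-(z / (a * y))) * ((1 / b) * Real.exp (-(y / b)))
    ∧ (∫ y in Set.Ioi (0 : ℝ), Real.exp (-(z / (a * y))) * ((1 / b) * Real.exp (-(y / b))))
        = 2 * Real.sqrt (z / (a * b)) * besselK1 (2 * Real.sqrt (z / (a * b))) := by
  have hc : 0 < Real.sqrt (z / (a * b)) := Real.sqrt_pos.mpr (by positivity)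
  have hc2 : (Real.sqrt (z / (a * b)))^2 = z / (a * b) := Real.sq_sqrt (by positivity)
  refine ⟨part1 P X Y hX hY ha hb hXlaw hYlaw hindep hz, ?_⟩
  rw [besselK1]
  exact part2 ha hb hz hc hc2
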